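/- For a sequence M of positive reals, ω_M(t) < ∞ for all t ≥ 0 if and only if lim_{p→∞} (M_p)^{1/p} = +∞. -/

import Mathlib

open Filter

noncomputable def omegaM (M : ℕ → ℝ) (t : ℝ) : EReal :=
  ⨆ p : ℕ, (Real.log (M 0 * t ^ p / M p) : EReal)

theorem omega_finite_iff_roots_tendsto_top
    (M : ℕ → ℝ) (hM : ∀ p, 0 < M p) :
    (∀ t : ℝ, 0 ≤ t → omegaM M t < ⊤) ↔
      Tendsto (fun p : ℕ => (M p) ^ (1 / (p : ℝ))) atTop atTop := by
  constructor
  · -- finite ⇒ roots tend to ∞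
    intro hfin
    rw [tendsto_atTop]
    by_contra hnot
    push_neg at hnot
    obtain ⟨b, hb⟩ := hnot
    set C : ℝ := max b 1 with hC
    have hC1 : (1 : ℝ) ≤ C := le_max_right _ _
    have hC0 : (0 : ℝ) < C := lt_of_lt_of_le one_pos hC1
    set t : ℝ := Real.exp 1 * C with htdef
    have ht : (0 : ℝ) ≤ t := le_of_lt (mul_pos (Real.exp_pos 1) hC0)
    have hS := hfin t ht
    -- the sup is at least its p = 0 term, which is 0
    have h0 : (0 : EReal) ≤ omegaM M t := by
      have : ((Real.log (M 0 * t ^ 0 / M 0) : ℝ) : EReal) ≤ omegaM M t :=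
        le_iSup (fun p : ℕ => ((Real.log (M 0 * t ^ p / M p) : ℝ) : EReal)) 0
      have heq : M 0 * t ^ 0 / M 0 = 1 := by
        rw [pow_zero, mul_one, div_self (hM 0).ne']
      rw [heq, Real.log_one] at this
      exact_mod_cast this
    have hSbot : omegaM M t ≠ ⊥ := fun h => by simp [h] at h0
    have hStop : omegaM M t ≠ ⊤ := ne_of_lt hS
    set B : ℝ := (omegaM M t).toReal with hB
    have hcoe : omegaM M t = (B : EReal) := (EReal.coe_toReal hStop hSbot).symm
    have hbound : ∀ p : ℕ, Real.log (M 0 * t ^ p / M p) ≤ B := by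
      intro p
      have : ((Real.log (M 0 * t ^ p / M p) : ℝ) : EReal) ≤ omegaM M t :=
        le_iSup (fun p : ℕ => ((Real.log (M 0 * t ^ p / M p) : ℝ) : EReal)) p
      rw [hcoe] at this
      exact_mod_cast this
    -- choose a large p with (M p)^(1/p) < b
    set N : ℕ := ⌈B - Real.log (M 0)⌉₊ + 1 with hN
    obtain ⟨p, hpb, hpN⟩ := (hb.and_eventually (eventually_ge_atTop N)).exists
    have hp1 : 1 ≤ p := le_trans (Nat.le_add_left 1 _) hpN
    have hp0 : (p : ℝ) ≠ 0 := Nat.cast_ne_zero.mpr (by omega)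
    have hMpC : M p < C ^ p := by
      have hlt : M p ^ (1 / (p : ℝ)) < C := lt_of_lt_of_le hpb (le_max_left _ _)
      have hpow : (M p ^ (1 / (p : ℝ))) ^ p < C ^ p :=
        pow_lt_pow_left₀ hlt (Real.rpow_nonneg (hM p).le _) (by omega)
      have hid : (M p ^ (1 / (p : ℝ))) ^ p = M p := by
        rw [← Real.rpow_natCast (M p ^ (1 / (p : ℝ))) p, ← Real.rpow_mul (hM p).le,
          one_div_mul_cancel hp0, Real.rpow_one]
      rwa [hid] at hpow
    have hkey : M 0 * Real.exp p < M 0 * t ^ p / M p := by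
      rw [lt_div_iff₀ (hM p)]
      have htp : t ^ p = Real.exp p * C ^ p := by
        rw [htdef, mul_pow, ← Real.exp_one_pow]
      rw [htp]
      have : M 0 * Real.exp p * M p < M 0 * Real.exp p * C ^ p := by
        exact mul_lt_mul_of_pos_left hMpC (mul_pos (hM 0) (Real.exp_pos _))
      calc M 0 * Real.exp p * M p < M 0 * Real.exp p * C ^ p := this
        _ = M 0 * (Real.exp p * C ^ p) := by ring
    have hlog : Real.log (M 0) + p < Real.log (M 0 * t ^ p / M p) := by
      have := Real.log_lt_log (mul_pos (hM 0) (Real.exp_pos _)) hkey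
      rwa [Real.log_mul (hM 0).ne' (Real.exp_ne_zero _), Real.log_exp] at this
    have hpB : B - Real.log (M 0) < p := by
      have h1 : B - Real.log (M 0) ≤ (⌈B - Real.log (M 0)⌉₊ : ℝ) := Nat.le_ceil _
      have h2 : (⌈B - Real.log (M 0)⌉₊ : ℝ) < N := by
        rw [hN]; push_cast; linarith
      have h3 : (N : ℝ) ≤ p := by exact_mod_cast hpN
      linarith
    have := hbound p
    linarith
  · -- roots tend to ∞ ⇒ finite
    intro htend t ht
    have hev : ∀ᶠ p : ℕ in atTop, t + 1 ≤ M p ^ (1 / (p : ℝ)) :=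
      htend.eventually_ge_atTop (t + 1)
    obtain ⟨N, hNle⟩ := (hev.and (eventually_ge_atTop 1)).exists_forall_of_atTop
    set B : ℝ := (∑ p ∈ Finset.range N, |Real.log (M 0 * t ^ p / M p)|) + |Real.log (M 0)|
      with hBdef
    have hsum_nonneg : (0:ℝ) ≤ ∑ p ∈ Finset.range N, |Real.log (M 0 * t ^ p / M p)| :=
      Finset.sum_nonneg fun _ _ => abs_nonneg _
    have hbound : ∀ p : ℕ, Real.log (M 0 * t ^ p / M p) ≤ B := by
      intro p
      by_cases hpN : p < N
      · have h1 : Real.log (M 0 * t ^ p / M p) ≤ |Real.log (M 0 * t ^ p / M p)| :=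
          le_abs_self _
        have h2 : |Real.log (M 0 * t ^ p / M p)| ≤
            ∑ q ∈ Finset.range N, |Real.log (M 0 * t ^ q / M q)| :=
          Finset.single_le_sum (f := fun q => |Real.log (M 0 * t ^ q / M q)|)
            (fun _ _ => abs_nonneg _) (Finset.mem_range.mpr hpN)
        have := abs_nonneg (Real.log (M 0))
        linarith
      · push_neg at hpN
        obtain ⟨hroot, hp1⟩ := hNle p hpN
        have hp0 : (p : ℝ) ≠ 0 := Nat.cast_ne_zero.mpr (by omega)
        -- (t+1)^p ≤ M p
        have h1 : (t + 1) ^ p ≤ M p := by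
          have := Real.rpow_le_rpow (by linarith) hroot (le_of_lt (by positivity : (0:ℝ) < p))
          rwa [← Real.rpow_mul (hM p).le, one_div_mul_cancel hp0, Real.rpow_one,
            Real.rpow_natCast] at this
        have h2 : t ^ p ≤ M p :=
          le_trans (pow_le_pow_left₀ ht (by linarith) p) h1
        have h3 : M 0 * t ^ p / M p ≤ M 0 := by
          rw [div_le_iff₀ (hM p)]
          nlinarith [hM 0, hM p, pow_nonneg ht p]
        have h4 : Real.log (M 0 * t ^ p / M p) ≤ |Real.log (M 0)| := by
          rcases eq_or_lt_of_le (div_nonneg (mul_nonneg (hM 0).le (pow_nonneg ht p))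
            (hM p).le) with h | h
          · rw [← h, Real.log_zero]; exact abs_nonneg _
          · exact le_trans (Real.log_le_log h h3) (le_abs_self _)
        linarith
    calc omegaM M t ≤ (B : EReal) := iSup_le fun p => by exact_mod_cast hbound p
      _ < ⊤ := EReal.coe_lt_top B
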